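/- arXiv:1510.00091 — 2 statements merged into one kernel-verified Lean document; each statement's English description precedes it below -/
import Mathlib

section
/- When the estimated output equals the measured output without measurement noise (C = C_m, H = H_m, N = 0), the posterior output error covariance equals (C_m P C_mᵀ + H_m Q H_mᵀ)(C_m P C_mᵀ + H_m Q H_mᵀ + R)⁻¹ R, and this matrix is dominated by R in the Loewner order. -/
open Matrix

theorem map_starRingEnd_real_aux {a b : Type*} (M : Matrix a b ℝ) :
    M.map (starRingEnd ℝ) = M := by
  ext i j; simp

/-- When the estimated output equals the measured output without measurement noise
(C = Cm, H = Hm, N = 0), the posterior output error covariance equals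
(Cm P Cmᵀ + Hm Q Hmᵀ)(Cm P Cmᵀ + Hm Q Hmᵀ + R)⁻¹ R, and it is dominated by R. -/
theorem posterior_output_cov_measured {n p m : ℕ}
    (Cm : Matrix (Fin m) (Fin n) ℝ) (Hm : Matrix (Fin m) (Fin p) ℝ)
    (P : Matrix (Fin n) (Fin n) ℝ) (Q : Matrix (Fin p) (Fin p) ℝ)
    (R : Matrix (Fin m) (Fin m) ℝ)
    (hP : P.PosSemidef) (hQ : Q.PosSemidef) (hR : R.PosDef) :
    (Cm * P * Cmᵀ + Hm * Q * Hmᵀ)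
        - (Cm * P * Cmᵀ + Hm * Q * Hmᵀ)
          * (Cm * P * Cmᵀ + Hm * Q * Hmᵀ + R)⁻¹
          * (Cm * P * Cmᵀ + Hm * Q * Hmᵀ)ᵀ
      = (Cm * P * Cmᵀ + Hm * Q * Hmᵀ) * (Cm * P * Cmᵀ + Hm * Q * Hmᵀ + R)⁻¹ * R
    ∧ (R - (Cm * P * Cmᵀ + Hm * Q * Hmᵀ)
          * (Cm * P * Cmᵀ + Hm * Q * Hmᵀ + R)⁻¹ * R).PosSemidef := by
  set A := Cm * P * Cmᵀ + Hm * Q * Hmᵀ with hAdef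
  have hA : A.PosSemidef := by
    have h1 : (Cm * P * Cmᵀ).PosSemidef := by
      simpa [Matrix.conjTranspose, map_starRingEnd_real_aux, Matrix.mul_assoc] using hP.mul_mul_conjTranspose_same Cm
    have h2 : (Hm * Q * Hmᵀ).PosSemidef := by
      simpa [Matrix.conjTranspose, map_starRingEnd_real_aux, Matrix.mul_assoc] using hQ.mul_mul_conjTranspose_same Hm
    exact h1.add h2
  have hS : (A + R).PosDef := Matrix.PosDef.posSemidef_add hA hR
  have hSinv : IsUnit (A + R).det := hS.det_pos.ne'.isUnit
  have hmulinv : (A + R) * (A + R)⁻¹ = 1 := Matrix.mul_nonsing_inv _ hSinv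
  have hinvmul : (A + R)⁻¹ * (A + R) = 1 := Matrix.nonsing_inv_mul _ hSinv
  have hAT : Aᵀ = A := by
    have := hA.isHermitian
    simpa [Matrix.IsHermitian, Matrix.conjTranspose, map_starRingEnd_real_aux] using this
  have key : A - A * (A + R)⁻¹ * Aᵀ = A * (A + R)⁻¹ * R := by
    rw [hAT]
    have : A = A * (A + R)⁻¹ * (A + R) := by
      rw [Matrix.mul_assoc, hinvmul, Matrix.mul_one]
    calc A - A * (A + R)⁻¹ * A = A * (A + R)⁻¹ * (A + R) - A * (A + R)⁻¹ * A := by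
          rw [← this]
      _ = A * (A + R)⁻¹ * R := by
          rw [Matrix.mul_add]; abel
  refine ⟨key, ?_⟩
  have hRT : Rᵀ = R := by
    have := hR.posSemidef.isHermitian
    simpa [Matrix.IsHermitian, Matrix.conjTranspose, map_starRingEnd_real_aux] using this
  have key2 : R - A * (A + R)⁻¹ * R = R * (A + R)⁻¹ * R := by
    have : R = (A + R) * (A + R)⁻¹ * R := by rw [hmulinv, Matrix.one_mul]
    calc R - A * (A + R)⁻¹ * R = (A + R) * (A + R)⁻¹ * R - A * (A + R)⁻¹ * R := by
          rw [← this]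
      _ = R * (A + R)⁻¹ * R := by rw [Matrix.add_mul, Matrix.add_mul]; abel
  rw [key2]
  have hSinvPSD : ((A + R)⁻¹).PosSemidef := (hS.inv).posSemidef
  have := hSinvPSD.conjTranspose_mul_mul_same R
  simpa [Matrix.conjTranspose, map_starRingEnd_real_aux, hRT, Matrix.mul_assoc] using this
end

section
/- The one-step Kalman prediction error covariance update P⁺ = (A P Aᵀ + G Q Gᵀ) − (A P C_mᵀ + G Q H_mᵀ + G N) S⁻¹ (A P C_mᵀ + G Q H_mᵀ + G N)ᵀ, with S = C_m P C_mᵀ + R̄ positive definite, yields a positive semidefinite matrix P⁺ whenever P, and the joint noise covariance [[Q, N],[Nᵀ, R]] are positive semidefinite. -/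
open Matrix

/-- The one-step Kalman prediction error covariance update yields a positive semidefinite
matrix whenever P and the joint noise covariance [[Q, N],[Nᵀ, R]] are positive semidefinite
and the innovation covariance S is positive definite. -/
theorem riccati_update_posSemidef {n p m : ℕ}
    (A : Matrix (Fin n) (Fin n) ℝ) (G : Matrix (Fin n) (Fin p) ℝ)
    (Cm : Matrix (Fin m) (Fin n) ℝ) (Hm : Matrix (Fin m) (Fin p) ℝ)
    (P : Matrix (Fin n) (Fin n) ℝ) (Q : Matrix (Fin p) (Fin p) ℝ)
    (R : Matrix (Fin m) (Fin m) ℝ) (N : Matrix (Fin p) (Fin m) ℝ)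
    (hP : P.PosSemidef)
    (hnoise : (Matrix.fromBlocks Q N Nᵀ R).PosSemidef)
    (hS : (Cm * P * Cmᵀ + (R + Hm * Q * Hmᵀ + Hm * N + Nᵀ * Hmᵀ)).PosDef) :
    ((A * P * Aᵀ + G * Q * Gᵀ)
      - (A * P * Cmᵀ + G * Q * Hmᵀ + G * N)
        * (Cm * P * Cmᵀ + (R + Hm * Q * Hmᵀ + Hm * N + Nᵀ * Hmᵀ))⁻¹
        * (A * P * Cmᵀ + G * Q * Hmᵀ + G * N)ᵀ).PosSemidef := by
  set S11 := A * P * Aᵀ + G * Q * Gᵀ with hS11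
  set S12 := A * P * Cmᵀ + G * Q * Hmᵀ + G * N with hS12
  set S := Cm * P * Cmᵀ + (R + Hm * Q * Hmᵀ + Hm * N + Nᵀ * Hmᵀ) with hSdef
  haveI : Invertible S := invertibleOfIsUnitDet S (isUnit_iff_ne_zero.mpr hS.det_pos.ne')
  rw [show S12ᵀ = S12ᴴ from (conjTranspose_eq_transpose_of_trivial _).symm,
    ← Matrix.PosDef.fromBlocks₂₂ (R' := ℝ) S11 S12 hS]
  have hQt : Qᵀ = Q := by
    ext i j
    have h := congrFun (congrFun hnoise.isHermitian (Sum.inl i)) (Sum.inl j)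
    simpa [Matrix.conjTranspose_apply, Matrix.fromBlocks] using h
  have hPt : Pᵀ = P := hP.isHermitian
  have key : fromBlocks S11 S12 S12ᴴ S
      = (fromRows A Cm) * P * (fromRows A Cm)ᴴ
        + (fromBlocks G 0 Hm (1 : Matrix (Fin m) (Fin m) ℝ)) * (fromBlocks Q N Nᵀ R) * (fromBlocks G 0 Hm (1 : Matrix (Fin m) (Fin m) ℝ))ᴴ := by
    simp only [conjTranspose_fromRows_eq_fromCols_conjTranspose, fromBlocks_conjTranspose,
      fromRows_mul, mul_fromCols, fromRows_mul_fromCols, fromBlocks_multiply,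
      fromCols_fromRows_eq_fromBlocks, conjTranspose_zero, conjTranspose_one,
      Matrix.mul_zero, Matrix.zero_mul, Matrix.mul_one, Matrix.one_mul, add_zero, zero_add]
    rw [fromBlocks_add, fromBlocks_inj]
    refine ⟨?_, ?_, ?_, ?_⟩
    · simp [hS11, Matrix.mul_assoc, conjTranspose_eq_transpose_of_trivial]
    · simp only [hS12, conjTranspose_eq_transpose_of_trivial, Matrix.mul_assoc]
      abel
    · simp only [hS12, conjTranspose_eq_transpose_of_trivial, transpose_add, transpose_mul,
        transpose_transpose, hPt, hQt, Matrix.add_mul, Matrix.mul_assoc]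
      abel
    · simp only [hSdef, conjTranspose_eq_transpose_of_trivial, Matrix.add_mul, Matrix.one_mul,
        Matrix.mul_one, Matrix.mul_assoc]
      abel
  rw [key]
  exact ((hP.mul_mul_conjTranspose_same _).add (hnoise.mul_mul_conjTranspose_same _))
end
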